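/- Under the hypotheses of the previous sufficient-decrease lemma (convex $f_i$ with $L$-Lipschitz gradient, convex lsc $g_i$, $\beta\in(0,1/2)$, $d\ne 0$ an $\varepsilon$-normalized descent direction of $\mathcal{V}$ at $x$), for every $\eta$ with $0<\eta\le(1-2\beta)\zeta_\varepsilon$ and every $i$, the strict decrease $\mathcal{V}_i(x+\eta d)<\mathcal{V}_i(x)$ holds; in fact $\mathcal{V}_i(x+\eta d)-\mathcal{V}_i(x)\le-2\eta\beta\varepsilon\|d\|^2<0$. -/

import Mathlib

noncomputable section

/-- Convexity for extended-real-valued functions. -/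
def ERealConvexOn {n : ℕ} (g : EuclideanSpace ℝ (Fin n) → EReal) : Prop :=
  ∀ a b : EuclideanSpace ℝ (Fin n), ∀ θ : ℝ, 0 ≤ θ → θ ≤ 1 →
    g (θ • a + (1 - θ) • b) ≤ (θ : EReal) * g a + ((1 - θ : ℝ) : EReal) * g b

/-- `ψ(x,y) = max_i { ⟨∇f_i(x), y⟩ + g_i(x+y) - g_i(x) }`. -/
def psi {n m : ℕ} (Gf : Fin m → EuclideanSpace ℝ (Fin n) → EuclideanSpace ℝ (Fin n))
    (g : Fin m → EuclideanSpace ℝ (Fin n) → EReal)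
    (x y : EuclideanSpace ℝ (Fin n)) : EReal :=
  ⨆ i, (((inner ℝ (Gf i x) y : ℝ) : EReal) + g i (x + y) - g i x)
lemma descent_lemma {n : ℕ} (f : EuclideanSpace ℝ (Fin n) → ℝ)
    (Gf : EuclideanSpace ℝ (Fin n) → EuclideanSpace ℝ (Fin n))
    (hdiff : ∀ x, HasGradientAt f (Gf x) x)
    (L : ℝ) (hL0 : 0 ≤ L) (hlip : LipschitzWith (Real.toNNReal L) Gf)
    (x d : EuclideanSpace ℝ (Fin n)) (η : ℝ) (hη : 0 ≤ η) :
    f (x + η • d) ≤ f x + η * inner ℝ (Gf x) d + L * η ^ 2 / 2 * ‖d‖ ^ 2 := by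
  have hcont : Continuous Gf := hlip.continuous
  have hder : ∀ t : ℝ, HasDerivAt (fun s : ℝ => f (x + s • d))
      ((inner ℝ (Gf (x + t • d)) d : ℝ)) t := by
    intro t
    have h1 : HasDerivAt (fun s : ℝ => x + s • d) d t := by
      simpa using ((hasDerivAt_id t).smul_const d).const_add x
    have h2 := (hdiff (x + t • d)).hasFDerivAt.comp_hasDerivAt t h1
    have h3 : HasDerivAt (f ∘ fun s : ℝ => x + s • d) (inner ℝ (Gf (x + t • d)) d) t := by
      simpa using h2
    exact h3
  have hgc : Continuous fun t : ℝ => (inner ℝ (Gf (x + t • d)) d : ℝ) :=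
    (Continuous.inner (hcont.comp (by continuity)) continuous_const)
  have hftc : f (x + η • d) - f (x + (0:ℝ) • d)
      = ∫ t in (0:ℝ)..η, (inner ℝ (Gf (x + t • d)) d : ℝ) :=
    (intervalIntegral.integral_eq_sub_of_hasDerivAt (fun t _ => hder t)
      (hgc.intervalIntegrable 0 η)).symm
  have hbound : (∫ t in (0:ℝ)..η, (inner ℝ (Gf (x + t • d)) d : ℝ))
      ≤ ∫ t in (0:ℝ)..η, ((inner ℝ (Gf x) d : ℝ) + L * t * ‖d‖ ^ 2) := by
    apply intervalIntegral.integral_mono_on hη (hgc.intervalIntegrable 0 η)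
      ((continuous_const.add (by continuity)).intervalIntegrable 0 η)
    intro t ht
    rw [Set.mem_Icc] at ht
    have h2 : ‖Gf (x + t • d) - Gf x‖ ≤ L * (t * ‖d‖) := by
      have h := hlip.dist_le_mul (x + t • d) x
      rw [dist_eq_norm, dist_eq_norm, Real.coe_toNNReal L hL0] at h
      simpa [norm_smul, abs_of_nonneg ht.1, mul_assoc] using h
    have h3 : (inner ℝ (Gf (x + t • d) - Gf x) d : ℝ) ≤ L * (t * ‖d‖) * ‖d‖ :=
      le_trans (real_inner_le_norm _ _) (by gcongr)
    rw [inner_sub_left] at h3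
    simp only [Pi.add_apply]
    nlinarith [h3]
  have hval : (∫ t in (0:ℝ)..η, ((inner ℝ (Gf x) d : ℝ) + L * t * ‖d‖ ^ 2))
      = η * inner ℝ (Gf x) d + L * η ^ 2 / 2 * ‖d‖ ^ 2 := by
    rw [intervalIntegral.integral_add (f := fun _ => (inner ℝ (Gf x) d : ℝ))
      (g := fun t : ℝ => L * t * ‖d‖ ^ 2) (intervalIntegrable_const)
      (((continuous_const.mul continuous_id').mul continuous_const).intervalIntegrable 0 η)]
    simp only [intervalIntegral.integral_const, smul_eq_mul, sub_zero]
    have : (∫ t in (0:ℝ)..η, L * t * ‖d‖ ^ 2) = L * (η ^ 2 / 2) * ‖d‖ ^ 2 := by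
      have : (fun t : ℝ => L * t * ‖d‖ ^ 2) = fun t : ℝ => (L * ‖d‖ ^ 2) * t := by
        funext t; ring
      rw [this, intervalIntegral.integral_const_mul, integral_id]
      ring
    rw [this]; ring
  simp only [zero_smul, add_zero] at hftc
  linarith [hbound.trans_eq hval, hftc.le, hftc.ge]

theorem stmt3 {n m : ℕ} (hm : 0 < m)
    (f : Fin m → EuclideanSpace ℝ (Fin n) → ℝ)
    (Gf : Fin m → EuclideanSpace ℝ (Fin n) → EuclideanSpace ℝ (Fin n))
    (hfconv : ∀ i, ConvexOn ℝ Set.univ (f i))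
    (hfdiff : ∀ i x, HasGradientAt (f i) (Gf i x) x)
    (L : ℝ) (hL : 0 < L)
    (hlip : ∀ i, LipschitzWith (Real.toNNReal L) (Gf i))
    (g : Fin m → EuclideanSpace ℝ (Fin n) → EReal)
    (hgconv : ∀ i, ERealConvexOn (g i))
    (hglsc : ∀ i, LowerSemicontinuous (g i))
    (hgbot : ∀ i y, g i y ≠ ⊥)
    (x : EuclideanSpace ℝ (Fin n))
    (hgx : ∀ i, g i x ≠ ⊤)
    (ε β : ℝ) (hε : 0 < ε) (hβ0 : 0 < β) (hβ1 : β < 1 / 2)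
    (d : EuclideanSpace ℝ (Fin n)) (hd : d ≠ 0)
    (hdesc : psi Gf g x d + ((ε * ‖d‖ ^ 2 : ℝ) : EReal) ≤ 0) :
    ∀ η : ℝ, 0 < η → η ≤ (1 - 2 * β) * min (2 * ε / L) 1 → ∀ i,
      ((f i (x + η • d) : EReal) + g i (x + η • d)) - ((f i x : EReal) + g i x)
          ≤ ((-(2 * η * β * ε * ‖d‖ ^ 2) : ℝ) : EReal)
        ∧ -(2 * η * β * ε * ‖d‖ ^ 2) < (0 : ℝ)
        ∧ (f i (x + η • d) : EReal) + g i (x + η • d) < (f i x : EReal) + g i x := by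
  intro η hη0 hηle i
  have h2β : 0 < 1 - 2 * β := by linarith
  have hdn : 0 < ‖d‖ := norm_pos_iff.mpr hd
  have hneg : -(2 * η * β * ε * ‖d‖ ^ 2) < (0 : ℝ) := by
    nlinarith [mul_pos (mul_pos hη0 hβ0) (mul_pos hε (pow_pos hdn 2))]
  have hη1 : η ≤ 1 := by
    have h1 : min (2 * ε / L) 1 ≤ 1 := min_le_right _ _
    nlinarith [hηle]
  have hηL : L * η / 2 ≤ (1 - 2 * β) * ε := by
    have h1 : η ≤ (1 - 2 * β) * (2 * ε / L) := by
      refine hηle.trans ?_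
      gcongr
      exact min_le_left _ _
    have h2 : L * η ≤ L * ((1 - 2 * β) * (2 * ε / L)) := by gcongr
    rw [mul_comm] at h2
    field_simp at h2
    linarith
  -- real value of g i x
  have hax : ((g i x).toReal : EReal) = g i x := EReal.coe_toReal (hgx i) (hgbot i x)
  set a := (g i x).toReal with ha
  -- descent condition for component i
  have hpsi : psi Gf g x d ≤ ((-(ε * ‖d‖ ^ 2) : ℝ) : EReal) := by
    have h := (EReal.le_sub_iff_add_le (Or.inl (EReal.coe_ne_bot (ε * ‖d‖ ^ 2)))
      (Or.inl (EReal.coe_ne_top (ε * ‖d‖ ^ 2)))).mpr hdesc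
    refine h.trans_eq ?_
    rw [zero_sub, ← EReal.coe_neg]
  have hterm : ((inner ℝ (Gf i x) d : ℝ) : EReal) + g i (x + d) - g i x
      ≤ ((-(ε * ‖d‖ ^ 2) : ℝ) : EReal) := (le_iSup _ i).trans hpsi
  -- g i (x+d) is real
  have hbtop : g i (x + d) ≠ ⊤ := by
    intro h
    rw [h, ← hax] at hterm
    rw [EReal.add_top_of_ne_bot (EReal.coe_ne_bot _), EReal.top_sub_coe] at hterm
    simp at hterm
    rw [← EReal.coe_pow, ← EReal.coe_mul] at hterm
    exact EReal.coe_ne_bot _ hterm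
  have hbx : ((g i (x + d)).toReal : EReal) = g i (x + d) :=
    EReal.coe_toReal hbtop (hgbot i (x + d))
  set b := (g i (x + d)).toReal with hbdef
  rw [← hax, ← hbx] at hterm
  have hterm' : (inner ℝ (Gf i x) d : ℝ) + b - a ≤ -(ε * ‖d‖ ^ 2) := by
    exact_mod_cast hterm
  -- convexity of g
  have hpt : η • (x + d) + (1 - η) • x = x + η • d := by module
  have hconv := hgconv i (x + d) x η hη0.le hη1
  rw [hpt, ← hax, ← hbx] at hconv
  have hconv2 : g i (x + η • d) ≤ ((η * b + (1 - η) * a : ℝ) : EReal) := by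
    refine hconv.trans_eq ?_
    push_cast
    rfl
  have hctop : g i (x + η • d) ≠ ⊤ := ne_top_of_le_ne_top (EReal.coe_ne_top _) hconv2
  have hcx : ((g i (x + η • d)).toReal : EReal) = g i (x + η • d) :=
    EReal.coe_toReal hctop (hgbot i (x + η • d))
  set c := (g i (x + η • d)).toReal with hcdef
  have hc' : c ≤ η * b + (1 - η) * a := by
    rw [← hcx] at hconv2
    exact_mod_cast hconv2
  -- descent lemma for f
  have hf := descent_lemma (f i) (Gf i) (hfdiff i) L hL.le (hlip i) x d η hη0.le
  have hmain : f i (x + η • d) + c - (f i x + a) ≤ -(2 * η * β * ε * ‖d‖ ^ 2) := by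
    nlinarith [mul_le_mul_of_nonneg_left hterm' hη0.le,
      mul_le_mul_of_nonneg_right hηL (mul_nonneg hη0.le (sq_nonneg ‖d‖))]
  refine ⟨?_, hneg, ?_⟩
  · rw [← hax, ← hcx]
    rw [show ((f i (x + η • d) : ℝ) : EReal) + (c : EReal) = ((f i (x + η • d) + c : ℝ) : EReal) by push_cast; rfl,
      show ((f i x : ℝ) : EReal) + (a : EReal) = ((f i x + a : ℝ) : EReal) by push_cast; rfl,
      ← EReal.coe_sub]
    exact_mod_cast hmain
  · rw [← hax, ← hcx]
    have : f i (x + η • d) + c < f i x + a := by linarith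
    exact_mod_cast this
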